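/- ζ(3) = (1/7) ∫₀^{π} x(π - x) csc(x) dx. -/

import Mathlib

set_option maxHeartbeats 1000000

open Real MeasureTheory Filter

private lemma zc_coeff (n : ℕ) :
    ∫ x in (0:ℝ)..π, x * (π - x) * Real.sin ((2*n+1)*x) = 4 / (2*(n:ℝ)+1)^3 := by
  set k : ℝ := 2*(n:ℝ)+1 with hk
  have hk0 : k ≠ 0 := by positivity
  have key : ∀ x ∈ Set.uIcc (0:ℝ) π, HasDerivAt
      (fun x => -((π*x - x^2) * Real.cos (k*x))/k + (π - 2*x)*Real.sin (k*x)/k^2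
        - 2*Real.cos (k*x)/k^3)
      (x * (π - x) * Real.sin (k*x)) x := by
    intro x _
    have hkx : HasDerivAt (fun x : ℝ => k * x) k x := by
      simpa using (hasDerivAt_id x).const_mul k
    have hcos := hkx.cos
    have hsin := hkx.sin
    have hp : HasDerivAt (fun x : ℝ => π*x - x^2) (π - 2*x) x := by
      have := ((hasDerivAt_id x).const_mul π).sub (hasDerivAt_pow 2 x)
      simpa [Pi.sub_def] using this
    have hq : HasDerivAt (fun x : ℝ => π - 2*x) (-2) x := by
      simpa [Pi.sub_def] using (hasDerivAt_const x π).sub ((hasDerivAt_id x).const_mul 2)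
    have h1 := (((hp.mul hcos).neg).div_const k).add
      ((hq.mul hsin).div_const (k^2))
    have h2 := h1.sub ((hcos.const_mul 2).div_const (k^3))
    refine h2.congr_deriv ?_
    field_simp
    ring
  rw [intervalIntegral.integral_eq_sub_of_hasDerivAt key (by
    apply Continuous.intervalIntegrable; continuity)]
  have hs : Real.sin (k*π) = 0 := by
    have := Real.sin_int_mul_pi (2*(n:ℤ)+1)
    push_cast at this
    simpa [hk] using this
  have hc : Real.cos (k*π) = -1 := by
    have h : k*π = (n:ℝ)*(2*π) + π := by rw [hk]; ring
    rw [h, Real.cos_add_pi, Real.cos_nat_mul_two_pi]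
  simp [hs, hc]
  field_simp
  ring

private lemma zc_prod_to_sum (m : ℕ) (x : ℝ) :
    2 * Real.sin x * Real.sin ((2*m+1)*x)
      = Real.cos (2*m*x) - Real.cos ((2*m+2)*x) := by
  rw [Real.cos_sub_cos]
  have h1 : (2*(m:ℝ)*x + (2*m+2)*x)/2 = (2*m+1)*x := by ring
  have h2 : (2*(m:ℝ)*x - (2*m+2)*x)/2 = -x := by ring
  rw [h1, h2, Real.sin_neg]
  ring

private lemma zc_dirichlet (N : ℕ) (x : ℝ) :
    2 * Real.sin x * ∑ n ∈ Finset.range (N+1), Real.sin ((2*n+1)*x)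
      = 1 - Real.cos ((2*(N:ℝ)+2)*x) := by
  induction N with
  | zero => simpa using zc_prod_to_sum 0 x
  | succ N ih =>
      rw [Finset.sum_range_succ, mul_add, ih]
      have := zc_prod_to_sum (N+1) x
      push_cast at this ⊢
      rw [this]
      ring_nf

private lemma zc_g_le {x : ℝ} (h0 : 0 < x) (hπ : x ≤ π) :
    |x * (π - x) * (1 / Real.sin x)| ≤ π^2/2 := by
  rcases eq_or_lt_of_le hπ with rfl | hlt
  · simp; positivity
  · have hs : 0 < Real.sin x := Real.sin_pos_of_pos_of_lt_pi h0 hlt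
    have hkey : x * (π - x) ≤ π^2/2 * Real.sin x := by
      rcases le_or_gt x (π/2) with hx | hx
      · have h1 := Real.mul_le_sin h0.le hx
        have h2 : π^2/2 * (2/π*x) ≤ π^2/2 * Real.sin x :=
          mul_le_mul_of_nonneg_left h1 (by positivity)
        have h3 : π^2/2 * (2/π*x) = π*x := by field_simp
        nlinarith [sq_nonneg x]
      · have h1 := Real.mul_le_sin (x := π - x) (by linarith) (by linarith)
        rw [Real.sin_pi_sub] at h1
        have h2 : π^2/2 * (2/π*(π-x)) ≤ π^2/2 * Real.sin x :=
          mul_le_mul_of_nonneg_left h1 (by positivity)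
        have h3 : π^2/2 * (2/π*(π-x)) = π*(π-x) := by field_simp
        nlinarith [sq_nonneg (π - x), pi_pos]
    have hnn : 0 ≤ x * (π - x) * (1/Real.sin x) := by
      have : 0 ≤ π - x := by linarith
      positivity
    rw [abs_of_nonneg hnn, mul_one_div, div_le_iff₀ hs]
    linarith

private lemma zc_g_intOn :
    IntegrableOn (fun x : ℝ => x * (π - x) * (1 / Real.sin x)) (Set.Ioc 0 π) := by
  haveI : IsFiniteMeasure (volume.restrict (Set.Ioc (0:ℝ) π)) := by
    constructor
    simp [Real.volume_Ioc]
  refine ⟨((measurable_id.mul (measurable_const.sub measurable_id)).mul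
    (measurable_const.div Real.measurable_sin)).aestronglyMeasurable, ?_⟩
  apply MeasureTheory.HasFiniteIntegral.of_bounded (C := π^2/2)
  refine (ae_restrict_iff' measurableSet_Ioc).2 (ae_of_all _ fun x hx => ?_)
  exact zc_g_le hx.1 hx.2

private lemma zc_RL :
    Filter.Tendsto
      (fun N : ℕ => ∫ x in Set.Ioc (0:ℝ) π,
        (x * (π - x) * (1 / Real.sin x)) * Real.cos ((2*(N:ℝ)+2)*x))
      atTop (nhds 0) := by
  set gg : ℝ → ℝ := fun x => x * (π - x) * (1 / Real.sin x) with hggdef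
  have hG : Integrable ((Set.Ioc (0:ℝ) π).indicator gg) :=
    (integrable_indicator_iff measurableSet_Ioc).2 zc_g_intOn
  set G := (Set.Ioc (0:ℝ) π).indicator gg with hGdef
  set f : ℝ → ℂ := fun x => (G x : ℂ) with hfdef
  have hf : Integrable f := Complex.ofRealCLM.integrable_comp hG
  have T := Real.tendsto_integral_exp_smul_cocompact f
  have W : Tendsto (fun N : ℕ => (2*(N:ℝ)+2)/(2*π)) atTop atTop := by
    apply Tendsto.atTop_div_const (by positivity)
    apply tendsto_atTop_add_const_right
    exact tendsto_natCast_atTop_atTop.const_mul_atTop (by norm_num)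
  have T2 := T.comp (W.mono_right _root_.atTop_le_cocompact)
  have T3 : Tendsto (fun N : ℕ =>
      (∫ v : ℝ, Real.fourierChar (-(v * ((2*(N:ℝ)+2)/(2*π)))) • f v).re) atTop (nhds 0) := by
    have := (Complex.continuous_re.tendsto 0).comp T2
    simp only [Complex.zero_re] at this
    exact this
  refine T3.congr fun N => ?_
  symm
  set w : ℝ := (2*(N:ℝ)+2)/(2*π) with hw
  have hint : Integrable fun v : ℝ => Real.fourierChar (-(v * w)) • f v :=
    by simpa [mul_comm] using (Real.fourierIntegral_convergent_iff w).2 hf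
  have hpt : ∀ v : ℝ, (Real.fourierChar (-(v*w)) • f v).re
      = (Set.Ioc (0:ℝ) π).indicator (fun x => gg x * Real.cos ((2*(N:ℝ)+2)*x)) v := by
    intro v
    have h2 : 2*π*(-(v*w)) = -((2*(N:ℝ)+2)*v) := by
      rw [hw]; field_simp
    rw [Circle.smul_def, Real.fourierChar_apply, hfdef, h2]
    rw [smul_eq_mul, Complex.mul_re, Complex.exp_ofReal_mul_I_re]
    simp only [Complex.ofReal_re, Complex.ofReal_im, mul_zero, sub_zero, Real.cos_neg]
    by_cases hv : v ∈ Set.Ioc (0:ℝ) π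
    · simp [hGdef, Set.indicator_of_mem hv]; ring
    · simp [hGdef, Set.indicator_of_notMem hv]
  calc ∫ x in Set.Ioc (0:ℝ) π, gg x * Real.cos ((2*(N:ℝ)+2)*x)
      = ∫ v : ℝ, (Set.Ioc (0:ℝ) π).indicator
          (fun x => gg x * Real.cos ((2*(N:ℝ)+2)*x)) v :=
        (integral_indicator measurableSet_Ioc).symm
    _ = ∫ v : ℝ, (Real.fourierChar (-(v*w)) • f v).re := by
        congr 1; funext v; rw [hpt v]
    _ = (∫ v : ℝ, Real.fourierChar (-(v*w)) • f v).re := integral_re hint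

theorem zeta3_csc_integral_pi :
    (∑' n : ℕ, 1 / ((n : ℝ) + 1) ^ 3) =
      (1 / 7) * ∫ x in (0 : ℝ)..π, x * (π - x) * (1 / Real.sin x) := by
  set g : ℝ → ℝ := fun x => x * (π - x) * (1 / Real.sin x) with hgdef
  set I : ℝ := ∫ x in Set.Ioc (0:ℝ) π, g x with hIdef
  -- summability of 1/(n+1)^3
  have hZs : Summable (fun n : ℕ => 1 / ((n:ℝ)+1)^3) := by
    have h := summable_one_div_nat_pow.2 (show 1 < 3 by norm_num)
    have := (summable_nat_add_iff 1).2 h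
    refine this.congr fun n => ?_
    push_cast
    ring
  have hOs : Summable (fun n : ℕ => 1 / (2*(n:ℝ)+1)^3) := by
    have := hZs.comp_injective (i := fun n : ℕ => 2*n) (fun a b h => by dsimp only at h; omega)
    refine this.congr fun n => ?_
    simp only [Function.comp_apply]
    push_cast
    ring_nf
  set Z : ℝ := ∑' n : ℕ, 1 / ((n:ℝ)+1)^3 with hZdef
  set O : ℝ := ∑' n : ℕ, 1 / (2*(n:ℝ)+1)^3 with hOdef
  -- key decomposition for each N
  have hdecomp : ∀ N : ℕ,
      I = (∑ n ∈ Finset.range (N+1), 8 / (2*(n:ℝ)+1)^3)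
        + ∫ x in Set.Ioc (0:ℝ) π, g x * Real.cos ((2*(N:ℝ)+2)*x) := by
    intro N
    have hpt : ∀ x ∈ Set.Ioc (0:ℝ) π,
        g x = (∑ n ∈ Finset.range (N+1), 2 * (x * (π - x) * Real.sin ((2*n+1)*x)))
          + g x * Real.cos ((2*(N:ℝ)+2)*x) := by
      intro x hx
      rcases eq_or_lt_of_le hx.2 with rfl | hlt
      · simp [hgdef]
      · have hs : Real.sin x ≠ 0 := (Real.sin_pos_of_pos_of_lt_pi hx.1 hlt).ne'
        have hd := zc_dirichlet N x
        have hgs : g x * Real.sin x = x * (π - x) := by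
          rw [hgdef]
          field_simp
        calc g x = g x * (2 * Real.sin x * ∑ n ∈ Finset.range (N+1),
                Real.sin ((2*n+1)*x)) + g x * Real.cos ((2*(N:ℝ)+2)*x) := by
              rw [hd]; ring
          _ = (∑ n ∈ Finset.range (N+1), 2 * (x * (π - x) * Real.sin ((2*n+1)*x)))
              + g x * Real.cos ((2*(N:ℝ)+2)*x) := by
              congr 1
              rw [Finset.mul_sum, Finset.mul_sum]
              refine Finset.sum_congr rfl fun n _ => ?_
              calc g x * (2 * Real.sin x * Real.sin ((2*n+1)*x))
                  = 2 * ((g x * Real.sin x) * Real.sin ((2*n+1)*x)) := by ring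
                _ = 2 * (x * (π - x) * Real.sin ((2*n+1)*x)) := by rw [hgs]
    have hint1 : IntegrableOn (fun x : ℝ =>
        ∑ n ∈ Finset.range (N+1), 2 * (x * (π - x) * Real.sin ((2*n+1)*x)))
        (Set.Ioc 0 π) := by
      apply Continuous.integrableOn_Ioc
      exact continuous_finset_sum _ fun n _ => continuous_const.mul
        ((continuous_id.mul (continuous_const.sub continuous_id)).mul
          (Real.continuous_sin.comp (continuous_const.mul continuous_id)))
    have hint2 : IntegrableOn (fun x : ℝ => g x * Real.cos ((2*(N:ℝ)+2)*x))
        (Set.Ioc 0 π) := by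
      have hb := zc_g_intOn.bdd_mul (f := fun x : ℝ => Real.cos ((2*(N:ℝ)+2)*x))
        ((Real.continuous_cos.comp (by continuity)).aestronglyMeasurable)
        (c := 1) (ae_of_all _ fun x => by simpa using Real.abs_cos_le_one _)
      simpa [hgdef, mul_comm, IntegrableOn] using hb
    calc I = ∫ x in Set.Ioc (0:ℝ) π,
          ((∑ n ∈ Finset.range (N+1), 2 * (x * (π - x) * Real.sin ((2*n+1)*x)))
            + g x * Real.cos ((2*(N:ℝ)+2)*x)) := by
          rw [hIdef]
          exact setIntegral_congr_fun measurableSet_Ioc hpt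
      _ = (∫ x in Set.Ioc (0:ℝ) π,
            ∑ n ∈ Finset.range (N+1), 2 * (x * (π - x) * Real.sin ((2*n+1)*x)))
          + ∫ x in Set.Ioc (0:ℝ) π, g x * Real.cos ((2*(N:ℝ)+2)*x) :=
          integral_add hint1 hint2
      _ = (∑ n ∈ Finset.range (N+1), 8 / (2*(n:ℝ)+1)^3)
          + ∫ x in Set.Ioc (0:ℝ) π, g x * Real.cos ((2*(N:ℝ)+2)*x) := by
          congr 1
          rw [integral_finset_sum]
          · refine Finset.sum_congr rfl fun n _ => ?_
            have := zc_coeff n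
            rw [intervalIntegral.integral_of_le Real.pi_pos.le] at this
            rw [MeasureTheory.integral_const_mul, this]
            ring
          · intro n _
            apply Continuous.integrableOn_Ioc
            exact continuous_const.mul
              ((continuous_id.mul (continuous_const.sub continuous_id)).mul
                (Real.continuous_sin.comp (continuous_const.mul continuous_id)))
  -- limits
  have hRL := zc_RL
  have hA : Tendsto (fun N : ℕ => ∑ n ∈ Finset.range (N+1), 8 / (2*(n:ℝ)+1)^3)
      atTop (nhds (8 * O)) := by
    have h1 : HasSum (fun n : ℕ => 8 * (1 / (2*(n:ℝ)+1)^3)) (8 * O) :=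
      hOs.hasSum.mul_left 8
    have h2 := h1.tendsto_sum_nat.comp (tendsto_add_atTop_nat 1)
    refine h2.congr fun N => ?_
    simp only [Function.comp_apply]
    exact Finset.sum_congr rfl fun n _ => by rw [mul_one_div]
  have hA' : Tendsto (fun N : ℕ => ∑ n ∈ Finset.range (N+1), 8 / (2*(n:ℝ)+1)^3)
      atTop (nhds I) := by
    have h2 : Tendsto (fun N : ℕ => I - ∫ x in Set.Ioc (0:ℝ) π,
        g x * Real.cos ((2*(N:ℝ)+2)*x)) atTop (nhds (I - 0)) :=
      tendsto_const_nhds.sub hRL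
    rw [sub_zero] at h2
    refine h2.congr fun N => ?_
    have := hdecomp N
    linarith
  have hIO : 8 * O = I := tendsto_nhds_unique hA hA'
  -- parity split
  have hEs : Summable (fun k : ℕ => 1 / (((2*k : ℕ):ℝ)+1)^3) := by
    refine hOs.congr fun k => ?_
    push_cast
    ring_nf
  have hOs' : Summable (fun k : ℕ => 1 / (((2*k+1 : ℕ):ℝ)+1)^3) := by
    have := hZs.comp_injective (i := fun n : ℕ => 2*n+1) (fun a b h => by dsimp only at h; omega)
    exact this
  have hsplit := tsum_even_add_odd (f := fun n : ℕ => 1 / ((n:ℝ)+1)^3) hEs hOs'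
  have hEval : (∑' k : ℕ, 1 / (((2*k : ℕ):ℝ)+1)^3) = O := by
    rw [hOdef]
    refine tsum_congr fun k => ?_
    push_cast
    ring_nf
  have hOval : (∑' k : ℕ, 1 / (((2*k+1 : ℕ):ℝ)+1)^3) = (1/8) * Z := by
    rw [hZdef, ← tsum_mul_left]
    refine tsum_congr fun k => ?_
    push_cast
    field_simp
    ring
  rw [hEval, hOval] at hsplit
  -- hsplit : O + (1/8) * Z = Z
  have hIeq : (∫ x in (0:ℝ)..π, x * (π - x) * (1 / Real.sin x)) = I := by
    rw [hIdef, intervalIntegral.integral_of_le Real.pi_pos.le]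
  rw [hIeq]
  linarith
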